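/- The polynomial F_{S2} := F_{S1}·(x0^9 − x1^3·x2^3·x3^3) + x1^6·x2^6·x3^6 is irreducible in the polynomial ring ℂ[x0, x1, x2, x3], where F_{S1} := x0^9 + (x1^3 − x2^3)·(x2^3 − x3^3)·(x3^3 − x1^3). -/

import Mathlib

open MvPolynomial

/-- The homogeneous degree-9 polynomial defining the surface `S1 ⊂ ℙ³_ℂ`. -/
noncomputable def FS1 : MvPolynomial (Fin 4) ℂ :=
  X 0 ^ 9 + (X 1 ^ 3 - X 2 ^ 3) * (X 2 ^ 3 - X 3 ^ 3) * (X 3 ^ 3 - X 1 ^ 3)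

/-- The homogeneous degree-18 polynomial defining the surface `S2 ⊂ ℙ³_ℂ`. -/
noncomputable def FS2 : MvPolynomial (Fin 4) ℂ :=
  FS1 * (X 0 ^ 9 - X 1 ^ 3 * X 2 ^ 3 * X 3 ^ 3) + X 1 ^ 6 * X 2 ^ 6 * X 3 ^ 6

noncomputable def Apoly : MvPolynomial (Fin 3) ℂ :=
  (X 0 ^ 3 - X 1 ^ 3) * (X 1 ^ 3 - X 2 ^ 3) * (X 2 ^ 3 - X 0 ^ 3)

noncomputable def ppoly : MvPolynomial (Fin 3) ℂ :=
  X 0 ^ 3 * X 1 ^ 3 * X 2 ^ 3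

noncomputable def fpoly : Polynomial (MvPolynomial (Fin 3) ℂ) :=
  Polynomial.X ^ 18 + Polynomial.C (Apoly - ppoly) * Polynomial.X ^ 9
    + Polynomial.C (ppoly ^ 2 - Apoly * ppoly)

lemma finSuccEquiv_FS2 : finSuccEquiv ℂ 3 FS2 = fpoly := by
  have h1 : (X 1 : MvPolynomial (Fin 4) ℂ) = X (Fin.succ 0) := rfl
  have h2 : (X 2 : MvPolynomial (Fin 4) ℂ) = X (Fin.succ 1) := rfl
  have h3 : (X 3 : MvPolynomial (Fin 4) ℂ) = X (Fin.succ 2) := rfl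
  rw [FS2, FS1, fpoly, Apoly, ppoly, h1, h2, h3]
  simp only [map_add, map_mul, map_sub, map_pow, finSuccEquiv_X_zero, finSuccEquiv_X_succ,
    Polynomial.C_sub, Polynomial.C_mul, Polynomial.C_pow]
  ring

lemma coeff_one_eq (p : Polynomial ℂ) : p.coeff 1 = (Polynomial.derivative p).eval 0 := by
  rw [← Polynomial.coeff_zero_eq_eval_zero, Polynomial.coeff_derivative]
  simp

lemma exists_point : ∃ c2 c3 : ℂ, c2 ^ 3 = 2 ∧ c3 ^ 6 = 5 * c3 ^ 3 - 2 := by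
  obtain ⟨γ, hγ⟩ : ∃ γ : ℂ, γ ^ 2 = 5 * γ - 2 := by
    refine ⟨(5 + Real.sqrt 17) / 2, ?_⟩
    have hs : (Real.sqrt 17 : ℂ) ^ 2 = 17 := by
      norm_cast
      rw [Real.sq_sqrt] ; norm_num
    field_simp
    linear_combination hs
  obtain ⟨c2, hc2⟩ := IsAlgClosed.exists_pow_nat_eq (k := ℂ) 2 (n := 3) (by norm_num)
  obtain ⟨c3, hc3⟩ := IsAlgClosed.exists_pow_nat_eq (k := ℂ) γ (n := 3) (by norm_num)
  exact ⟨c2, c3, hc2, by linear_combination hγ + (c3^3 + γ - 5) * hc3⟩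

lemma fpoly_monic : fpoly.Monic := by
  unfold fpoly
  monicity!

lemma fpoly_degree : fpoly.degree = 18 := by
  unfold fpoly
  compute_degree!

lemma fpoly_coeff (n : ℕ) : fpoly.coeff n =
    (if n = 18 then 1 else 0) + (if n = 9 then Apoly - ppoly else 0)
      + (if n = 0 then ppoly ^ 2 - Apoly * ppoly else 0) := by
  simp only [fpoly, Polynomial.coeff_add, Polynomial.coeff_C_mul, Polynomial.coeff_X_pow,
    Polynomial.coeff_C, mul_ite, mul_one, mul_zero]

lemma irreducible_fpoly : Irreducible fpoly := by
  obtain ⟨c2, c3, hc2, hc6⟩ := exists_point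
  have hc20 : c2 ≠ 0 := by
    intro h; rw [h] at hc2; norm_num at hc2
  have hc30 : c3 ≠ 0 := by
    intro h; rw [h] at hc6; norm_num at hc6
  set c : Fin 3 → ℂ := ![1, c2, c3] with hcv
  set φ : MvPolynomial (Fin 3) ℂ →+* ℂ := (MvPolynomial.eval c) with hφ
  set P : Ideal (MvPolynomial (Fin 3) ℂ) := RingHom.ker φ with hPdef
  have hP : P.IsPrime := RingHom.ker_isPrime φ
  have e9 : φ (Apoly - ppoly) = 0 := by
    simp only [hφ, Apoly, ppoly, map_sub, map_mul, map_pow, MvPolynomial.eval_X, hcv,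
      Matrix.cons_val_zero, Matrix.cons_val_one, Matrix.head_cons, Matrix.cons_val_two,
      Matrix.tail_cons]
    linear_combination ((-1:ℂ) + (2:ℂ)*c3^3 + (1:ℂ)*c2^3 + (-1:ℂ)*c2^3*c3^3) * hc2
      + ((-1:ℂ) + (1:ℂ)*c2^3) * hc6
  have mem9 : Apoly - ppoly ∈ P := by
    rw [hPdef, RingHom.mem_ker]; exact e9
  have mem0 : ppoly ^ 2 - Apoly * ppoly ∈ P := by
    have : ppoly ^ 2 - Apoly * ppoly = (Apoly - ppoly) * (-ppoly) := by ring
    rw [this]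
    exact Ideal.mul_mem_right _ _ mem9
  -- the tangent-direction homomorphism
  set w : Fin 3 → Polynomial ℂ := ![1, Polynomial.C c2 + Polynomial.X, Polynomial.C c3] with hw
  set ψ : MvPolynomial (Fin 3) ℂ →+* Polynomial ℂ := (MvPolynomial.aeval w).toRingHom with hψ
  have hcompat : (Polynomial.evalRingHom (0:ℂ)).comp ψ = φ := by
    apply MvPolynomial.ringHom_ext
    · intro r
      simp [hψ, hφ]
    · intro i
      fin_cases i <;> simp [hψ, hφ, hw, hcv]
  have hdvd : ∀ u ∈ P, Polynomial.X ∣ ψ u := by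
    intro u hu
    rw [Polynomial.X_dvd_iff, Polynomial.coeff_zero_eq_eval_zero]
    have : Polynomial.eval 0 (ψ u) = φ u := by
      rw [← hcompat]; rfl
    rw [this]
    rwa [hPdef, RingHom.mem_ker] at hu
  have hP2 : ∀ z ∈ P ^ 2, (Polynomial.X : Polynomial ℂ) ^ 2 ∣ ψ z := by
    intro z hz
    rw [pow_two] at hz
    refine Submodule.mul_induction_on hz ?_ ?_
    · intro u hu v hv
      rw [map_mul, pow_two]
      exact mul_dvd_mul (hdvd u hu) (hdvd v hv)
    · intro x y hx hy
      rw [map_add]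
      exact dvd_add hx hy
  have key : (ψ (ppoly ^ 2 - Apoly * ppoly)).coeff 1 = -6 * c2 ^ 2 * c3 ^ 3 := by
    rw [coeff_one_eq]
    simp only [hψ, Apoly, ppoly, AlgHom.toRingHom_eq_coe, RingHom.coe_coe, map_sub, map_mul,
      map_pow, MvPolynomial.aeval_X, hw, Matrix.cons_val_zero, Matrix.cons_val_one,
      Matrix.head_cons, Matrix.cons_val_two, Matrix.tail_cons]
    simp only [Polynomial.derivative_sub, Polynomial.derivative_mul, Polynomial.derivative_pow,
      Polynomial.derivative_add, Polynomial.derivative_C, Polynomial.derivative_X,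
      Polynomial.derivative_one, Polynomial.eval_sub, Polynomial.eval_mul, Polynomial.eval_add,
      Polynomial.eval_pow, Polynomial.eval_C, Polynomial.eval_X, Polynomial.eval_one,
      Polynomial.eval_natCast, Polynomial.eval_zero, Polynomial.eval_ofNat]
    linear_combination ((12:ℂ)*c2^2 + (-30:ℂ)*c2^2*c3^3 + (-18:ℂ)*c2^5 + (36:ℂ)*c2^5*c3^3) * hc2
      + ((12:ℂ)*c2^2 + (3:ℂ)*c2^2*c3^3 + (-24:ℂ)*c2^5 + (-6:ℂ)*c2^5*c3^3 + (9:ℂ)*c2^8) * hc6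
  have h0 : fpoly.coeff 0 ∉ P ^ 2 := by
    rw [fpoly_coeff]
    norm_num
    intro hmem
    have hdv := hP2 _ hmem
    rw [Polynomial.X_pow_dvd_iff] at hdv
    have h1 := hdv 1 (by norm_num)
    rw [key] at h1
    have : c2 ^ 2 * c3 ^ 3 = 0 := by linear_combination (-1/6 : ℂ) * h1
    rcases mul_eq_zero.mp this with h | h
    · exact hc20 (pow_eq_zero_iff (by norm_num) |>.mp h)
    · exact hc30 (pow_eq_zero_iff (by norm_num) |>.mp h)
  have hfl : fpoly.leadingCoeff ∉ P := by
    rw [fpoly_monic.leadingCoeff]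
    intro h
    rw [hPdef, RingHom.mem_ker, map_one] at h
    exact one_ne_zero h
  have hfP : ∀ n : ℕ, (n : WithBot ℕ) < fpoly.degree → fpoly.coeff n ∈ P := by
    intro n hn
    rw [fpoly_degree] at hn
    have hn18 : n < 18 := by exact_mod_cast hn
    rw [fpoly_coeff, if_neg (by omega)]
    by_cases h9 : n = 9
    · by_cases h0' : n = 0
      · omega
      · rw [if_pos h9, if_neg h0']
        simpa using mem9
    · by_cases h0' : n = 0
      · rw [if_neg h9, if_pos h0']
        simpa using mem0
      · rw [if_neg h9, if_neg h0']
        simp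
  exact Polynomial.irreducible_of_eisenstein_criterion hP hfl hfP
    (by rw [fpoly_degree]; norm_num) h0 fpoly_monic.isPrimitive

/-- `F_{S2}` is irreducible in `ℂ[x0, x1, x2, x3]`. -/
theorem stmt_1 : Irreducible FS2 := by
  have h := irreducible_fpoly
  rw [← finSuccEquiv_FS2] at h
  exact (MulEquiv.irreducible_iff (finSuccEquiv ℂ 3).toMulEquiv).mp h
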